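/- arXiv:1912.05167 — 8 statements merged into one kernel-verified Lean document; each statement's English description precedes it below -/
import Mathlib

section
/- Let E be the Hesse cubic V(x^3+y^3+z^3-3λxyz) with zero o_E = (1:-1:0). For a point p = (a:b:c) ∈ E which is not 3-torsion, p is 2-torsion if and only if a = b. -/
open scoped Classical

noncomputable section

/-- Affine representatives `(a, b, c)` of points `(a : b : c)` of `ℙ²`. -/
abbrev Pt (k : Type*) := k × k × k

variable {k : Type*} [Field k]

/-- Projective equality of representatives: `q` is a nonzero scalar multiple of `p`. -/
def projEq (p q : Pt k) : Prop :=
  ∃ t : k, t ≠ 0 ∧ q = (t * p.1, t * p.2.1, t * p.2.2)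

/-- The Hesse cubic `x³ + y³ + z³ - 3λxyz = 0`. -/
def onHesse (lam : k) (p : Pt k) : Prop :=
  p.1 ^ 3 + p.2.1 ^ 3 + p.2.2 ^ 3 - 3 * lam * p.1 * p.2.1 * p.2.2 = 0

/-- The zero element `o_E = (1 : -1 : 0)` of the group law. -/
def oE : Pt k := (1, -1, 0)

/-- First chord formula for the addition on the Hesse cubic:
`p + q = (acβ² - b²αγ : bcα² - a²βγ : abγ² - c²αβ)`. -/
def add1 (p q : Pt k) : Pt k :=
  (p.1 * p.2.2 * q.2.1 ^ 2 - p.2.1 ^ 2 * q.1 * q.2.2,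
   p.2.1 * p.2.2 * q.1 ^ 2 - p.1 ^ 2 * q.2.1 * q.2.2,
   p.1 * p.2.1 * q.2.2 ^ 2 - p.2.2 ^ 2 * q.1 * q.2.1)

/-- Alternate chord formula for the addition on the Hesse cubic:
`p + q = (abα² - c²βγ : acγ² - b²αβ : bcβ² - a²αγ)`. -/
def add2 (p q : Pt k) : Pt k :=
  (p.1 * p.2.1 * q.1 ^ 2 - p.2.2 ^ 2 * q.2.1 * q.2.2,
   p.1 * p.2.2 * q.2.2 ^ 2 - p.2.1 ^ 2 * q.1 * q.2.1,
   p.2.1 * p.2.2 * q.2.1 ^ 2 - p.1 ^ 2 * q.1 * q.2.2)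

/-- The addition on the Hesse cubic: use the first formula when it is defined
(nonzero), otherwise the alternate one. -/
def hesseAdd (p q : Pt k) : Pt k :=
  if add1 p q ≠ (0, 0, 0) then add1 p q else add2 p q

/-- The inverse `(a : b : c) ↦ (b : a : c)`. -/
def hesseNeg (p : Pt k) : Pt k := (p.2.1, p.1, p.2.2)

/-- Subtraction: `p - q = p + (-q)`. -/
def hesseSub (p q : Pt k) : Pt k := hesseAdd p (hesseNeg q)

/-- `nP n p` is a representative of `np = p + ⋯ + p` (`n` summands). -/
def nP : ℕ → Pt k → Pt k
  | 0, _ => oE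
  | n + 1, p => hesseAdd (nP n p) p

/-- `p` is an `n`-torsion point: `np = o_E`. -/
def isTor (n : ℕ) (p : Pt k) : Prop := projEq (nP n p) (oE : Pt k)


lemma hesseAdd_of_add1_eq {p q : Pt k} (h : add1 p q = (0,0,0)) :
    hesseAdd p q = add2 p q := by
  unfold hesseAdd; rw [if_neg (by simpa using h)]

lemma hesseAdd_of_add1_ne {p q : Pt k} (h : add1 p q ≠ (0,0,0)) :
    hesseAdd p q = add1 p q := by
  unfold hesseAdd; exact if_pos h

lemma nP_two_c_ne (a b c : k) (hc : c ≠ 0) :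
    nP 2 ((a,b,c) : Pt k)
      = (b*c^2*(a^3-c^3), a*c^2*(c^3-b^3), c^3*(b^3-a^3)) := by
  have h0 : add1 (oE : Pt k) (a,b,c) = (-(a*c), -(b*c), -(c*c)) := by
    simp only [add1, oE, Prod.mk.injEq]; refine ⟨by ring, by ring, by ring⟩
  have h0ne : add1 (oE : Pt k) (a,b,c) ≠ (0,0,0) := by
    rw [h0]; intro h
    have h3 := congrArg (fun p : Pt k => p.2.2) h
    simp [mul_self_eq_zero] at h3
    exact hc h3
  have h1 : nP 1 ((a,b,c) : Pt k) = (-(a*c), -(b*c), -(c*c)) := by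
    show hesseAdd oE (a,b,c) = _
    rw [hesseAdd_of_add1_ne h0ne, h0]
  have h2 : add1 ((-(a*c), -(b*c), -(c*c)) : Pt k) (a,b,c) = (0,0,0) := by
    simp only [add1, Prod.mk.injEq]; refine ⟨by ring, by ring, by ring⟩
  show hesseAdd (nP 1 ((a,b,c) : Pt k)) (a,b,c) = _
  rw [h1, hesseAdd_of_add1_eq h2]
  simp only [add2, Prod.mk.injEq]; refine ⟨by ring, by ring, by ring⟩

lemma nP_two_c_zero (a b : k) :
    nP 2 ((a,b,0) : Pt k) = (a^5*b, -(a^3*b^3), 0) := by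
  have h0 : add1 (oE : Pt k) (a,b,0) = (0,0,0) := by
    simp only [add1, oE, Prod.mk.injEq]; refine ⟨by ring, by ring, by ring⟩
  have h1 : nP 1 ((a,b,0) : Pt k) = (-(a^2), -(a*b), 0) := by
    show hesseAdd oE (a,b,0) = _
    rw [hesseAdd_of_add1_eq h0]
    simp only [add2, oE, Prod.mk.injEq]; refine ⟨by ring, by ring, by ring⟩
  have h2 : add1 ((-(a^2), -(a*b), 0) : Pt k) (a,b,0) = (0,0,0) := by
    simp only [add1, Prod.mk.injEq]; refine ⟨by ring, by ring, by ring⟩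
  show hesseAdd (nP 1 ((a,b,0) : Pt k)) (a,b,0) = _
  rw [h1, hesseAdd_of_add1_eq h2]
  simp only [add2, Prod.mk.injEq]; refine ⟨by ring, by ring, by ring⟩

lemma tor3_diag (a : k) (ha : a ≠ 0) : isTor 3 ((a, -a, 0) : Pt k) := by
  have h2 : nP 2 ((a,-a,0) : Pt k) = (-(a^6), a^6, 0) := by
    rw [nP_two_c_zero]
    simp only [Prod.mk.injEq]; refine ⟨by ring, by ring, trivial⟩
  have hadd1 : add1 ((-(a^6), a^6, 0) : Pt k) (a,-a,0) = (0,0,0) := by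
    simp only [add1, Prod.mk.injEq]; refine ⟨by ring, by ring, by ring⟩
  have h3 : nP 3 ((a,-a,0) : Pt k) = (-(a^14), a^14, 0) := by
    show hesseAdd (nP 2 ((a,-a,0) : Pt k)) (a,-a,0) = _
    rw [h2, hesseAdd_of_add1_eq hadd1]
    simp only [add2, Prod.mk.injEq]; refine ⟨by ring, by ring, by ring⟩
  refine ⟨(-(a^14))⁻¹, by simp [ha], ?_⟩
  rw [h3]
  have hne : -(a^14) ≠ 0 := by simp [ha]
  simp only [oE, Prod.mk.injEq]
  refine ⟨by field_simp, by field_simp, by simp⟩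

/-- A point `p = (a:b:c)` on the Hesse cubic which is not 3-torsion is
2-torsion if and only if `a = b`. -/
theorem hesse_two_torsion_iff {k : Type*} [Field k] [IsAlgClosed k] [CharZero k]
    (lam : k) (hlam : lam ^ 3 ≠ 1) (a b c : k)
    (hne : ((a, b, c) : Pt k) ≠ (0, 0, 0))
    (hE : onHesse lam ((a, b, c) : Pt k))
    (h3 : ¬ isTor 3 ((a, b, c) : Pt k)) :
    isTor 2 ((a, b, c) : Pt k) ↔ a = b := by
  have hEq : a ^ 3 + b ^ 3 + c ^ 3 - 3 * lam * a * b * c = 0 := hE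
  constructor
  · intro h2
    obtain ⟨t, ht, heq⟩ := h2
    by_cases hc : c = 0
    · subst hc
      rw [nP_two_c_zero] at heq
      simp only [oE, Prod.mk.injEq] at heq
      obtain ⟨e1, e2, e3⟩ := heq
      have ha : a ≠ 0 := by intro h; rw [h] at e1; simp at e1
      have hb : b ≠ 0 := by intro h; rw [h] at e1; simp at e1
      have hfac : t * (a^3*b*(a^2-b^2)) = 0 := by linear_combination -e1 - e2
      have hfac2 : a^3*b*(a^2-b^2) = 0 := (mul_eq_zero.mp hfac).resolve_left ht
      have hb2 : a^2 = b^2 := by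
        rcases mul_eq_zero.mp hfac2 with h | h
        · rcases mul_eq_zero.mp h with h | h
          · exact absurd h (pow_ne_zero 3 ha)
          · exact absurd h hb
        · exact sub_eq_zero.mp h
      have hab0 : a^2*(a+b) = 0 := by linear_combination hEq + b*hb2
      have hab : a + b = 0 := (mul_eq_zero.mp hab0).resolve_left (pow_ne_zero 2 ha)
      have hbneg : b = -a := by linear_combination hab
      subst hbneg
      exact absurd (tor3_diag a ha) h3
    · rw [nP_two_c_ne a b c hc] at heq
      simp only [oE, Prod.mk.injEq] at heq
      obtain ⟨e1, e2, e3⟩ := heq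
      have hX : b*c^2*(a^3-c^3) ≠ 0 := by
        intro h; rw [h, mul_zero] at e1; exact one_ne_zero e1
      have hz : c^3*(b^3-a^3) = 0 := (mul_eq_zero.mp e3.symm).resolve_left ht
      have hb3 : b^3 = a^3 :=
        sub_eq_zero.mp ((mul_eq_zero.mp hz).resolve_left (pow_ne_zero 3 hc))
      have hsum : t * (c^2*((b-a)*(a^3-c^3))) = 0 := by
        linear_combination -e1 - e2 + t*c^2*a*hb3
      have hsum2 : (b-a)*(a^3-c^3) = 0 :=
        ((mul_eq_zero.mp hsum).resolve_left ht |> mul_eq_zero.mp).resolve_left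
          (pow_ne_zero 2 hc)
      rcases mul_eq_zero.mp hsum2 with h | h
      · exact (sub_eq_zero.mp h).symm
      · exact absurd (by rw [h, mul_zero]) hX
  · intro hab
    subst hab
    have ha : a ≠ 0 := by
      intro h
      apply hne
      have hc3 : c^3 = 0 := by rw [h] at hEq; linear_combination hEq
      have hc : c = 0 := (pow_eq_zero_iff (by norm_num)).mp hc3
      rw [h, hc]
    have hac : a^3 - c^3 ≠ 0 := by
      intro h
      apply hlam
      have hc0 : c ≠ 0 := by
        intro hc0
        rw [hc0] at h
        exact absurd (by linear_combination h : a^3 = 0) (pow_ne_zero 3 ha)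
      have h1 : 3*a^2*(a - lam*c) = 0 := by linear_combination hEq + h
      have h2 : a - lam*c = 0 := by
        rcases mul_eq_zero.mp h1 with h' | h'
        · exact absurd h' (mul_ne_zero (by norm_num) (pow_ne_zero 2 ha))
        · exact h'
      have halc : a = lam * c := by linear_combination h2
      rw [halc] at h
      have hl : (lam^3 - 1) * c^3 = 0 := by linear_combination h
      have hl2 := (mul_eq_zero.mp hl).resolve_right (pow_ne_zero 3 hc0)
      linear_combination hl2
    by_cases hc : c = 0
    · subst hc
      refine ⟨(a^6)⁻¹, inv_ne_zero (pow_ne_zero 6 ha), ?_⟩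
      rw [nP_two_c_zero]
      simp only [oE, Prod.mk.injEq]
      refine ⟨by field_simp, by field_simp, by simp⟩
    · refine ⟨(a*c^2*(a^3-c^3))⁻¹, inv_ne_zero (by
        exact mul_ne_zero (mul_ne_zero ha (pow_ne_zero 2 hc)) hac), ?_⟩
      rw [nP_two_c_ne a a c hc]
      simp only [oE, Prod.mk.injEq]
      have hX : a*c^2*(a^3-c^3) ≠ 0 :=
        mul_ne_zero (mul_ne_zero ha (pow_ne_zero 2 hc)) hac
      refine ⟨by field_simp, ?_, by simp⟩
      field_simp
      ring
end
end

section
/- Let E = V(x^3+y^3+z^3) (the Fermat cubic, λ = 0) and let τ2 be the automorphism τ2(a:b:c) = (b:a:cε) where ε is a primitive 3rd root of unity. Then the fixed-point set of τ2 on E is exactly {o_E} where o_E = (1:-1:0). -/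
open scoped Classical

noncomputable section

variable {k : Type*} [Field k]

/-- The automorphism `τ₂(a:b:c) = (b:a:cε)` of the Fermat cubic `V(x³+y³+z³)`
(`ε` a primitive 3rd root of unity). -/
def tau2 {k : Type*} [Field k] (eps : k) (p : Pt k) : Pt k := (p.2.1, p.1, p.2.2 * eps)

/-- The fixed-point set of `τ₂` on the Fermat cubic `E = V(x³+y³+z³)` is
exactly `{o_E}` where `o_E = (1:-1:0)`. -/
theorem fermat_tau2_fixed {k : Type*} [Field k] [IsAlgClosed k] [CharZero k]
    (eps : k) (heps : IsPrimitiveRoot eps 3)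
    (p : Pt k) (hne : p ≠ (0, 0, 0)) (hE : onHesse (0 : k) p) :
    projEq (tau2 eps p) p ↔ projEq p (oE : Pt k) := by
  have heps3 : eps ^ 3 = 1 := heps.pow_eq_one
  have heps1 : eps ≠ 1 := heps.ne_one (by norm_num)
  obtain ⟨a, b, c⟩ := p
  simp only [onHesse, tau2, projEq, oE, Prod.mk.injEq, Prod.ext_iff, ne_eq] at *
  constructor
  · rintro ⟨t, ht, ha, hb, hc⟩
    by_cases hc0 : c = 0
    · subst hc0
      have ha0 : a ≠ 0 := by
        rintro rfl
        rw [mul_zero] at hb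
        exact hne ⟨rfl, hb, rfl⟩
      have ht2 : t ^ 2 = 1 := by
        have h : (t ^ 2 - 1) * a = 0 := by linear_combination (-1 : k) * ha + (-t) * hb
        rcases mul_eq_zero.mp h with h | h
        · linear_combination h
        · exact absurd h ha0
      have ht' : t = 1 ∨ t = -1 := by
        have h : (t - 1) * (t + 1) = 0 := by linear_combination ht2
        rcases mul_eq_zero.mp h with h | h
        · left; linear_combination h
        · right; linear_combination h
      rcases ht' with rfl | rfl
      · exfalso
        apply ha0
        have h3 : a ^ 3 = 0 := by
          linear_combination hE / 2 - (a ^ 2 + a * b + b ^ 2) / 2 * hb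
        exact pow_eq_zero_iff (n := 3) (by norm_num) |>.mp h3
      · refine ⟨a⁻¹, inv_ne_zero ha0, by field_simp, ?_, by simp⟩
        rw [hb]; field_simp
    · exfalso
      have hte : t * eps = 1 := by
        have h : c * (t * eps - 1) = 0 := by linear_combination -hc
        rcases mul_eq_zero.mp h with h | h
        · exact absurd h hc0
        · linear_combination h
      have ha0 : a = 0 := by
        by_contra ha0
        have h : (t ^ 2 - 1) * a = 0 := by linear_combination (-1 : k) * ha + (-t) * hb
        have ht2 : t ^ 2 = 1 := by
          rcases mul_eq_zero.mp h with h | h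
          · linear_combination h
          · exact absurd h ha0
        have hteq : eps = t := by linear_combination t * hte - eps * ht2
        have he2 : eps ^ 2 = 1 := by rw [hteq]; exact ht2
        exact heps1 (by linear_combination heps3 - eps * he2)
      rw [ha0, mul_zero] at hb
      rw [ha0, hb] at hE
      apply hc0
      have h3 : c ^ 3 = 0 := by linear_combination hE
      exact pow_eq_zero_iff (n := 3) (by norm_num) |>.mp h3
  · rintro ⟨t, ht, h1, h2, h3⟩
    have hc : c = 0 := by
      rcases mul_eq_zero.mp h3.symm with h | h
      · exact absurd h ht
      · exact h
    have hb : b = -a := by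
      have h : t * b = t * (-a) := by linear_combination -h2 - h1
      exact mul_left_cancel₀ ht h
    exact ⟨-1, by norm_num, by rw [hb]; ring, by rw [hb]; ring, by rw [hc]; ring⟩
end
end

section
/- Let E = V(x^3+y^3+z^3-3λxyz) with λ = 1+√3 and let τ3 be the automorphism τ3(a:b:c) = (aε^2+bε+c : aε+bε^2+c : a+b+c), ε a primitive 3rd root of unity. Then the fixed-point set of τ3 on E is the subgroup of order 2 generated by (1:1:1+√3). -/
open scoped Classical

noncomputable section

variable {k : Type*} [Field k]

/-- The automorphism `τ₃(a:b:c) = (aε²+bε+c : aε+bε²+c : a+b+c)`. -/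
def tau3 {k : Type*} [Field k] (eps : k) (p : Pt k) : Pt k :=
  (p.1 * eps ^ 2 + p.2.1 * eps + p.2.2,
   p.1 * eps + p.2.1 * eps ^ 2 + p.2.2,
   p.1 + p.2.1 + p.2.2)

/-- For the Hesse cubic with `λ = 1 + √3`, the fixed-point set of `τ₃` on `E`
is the subgroup of order 2 generated by `(1:1:1+√3)`, i.e.
`{o_E, (1:1:1+√3)}`. -/
theorem hesse_tau3_fixed {k : Type*} [Field k] [IsAlgClosed k] [CharZero k]
    (eps s : k) (heps : IsPrimitiveRoot eps 3) (hs : s ^ 2 = 3)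
    (p : Pt k) (hne : p ≠ (0, 0, 0)) (hE : onHesse (1 + s) p) :
    projEq (tau3 eps p) p ↔
      (projEq p (oE : Pt k) ∨ projEq p ((1, 1, 1 + s) : Pt k)) := by
  obtain ⟨a, b, c⟩ := p
  have h3 : eps ^ 3 = 1 := heps.pow_eq_one
  have hne1 : eps ≠ 1 := heps.ne_one (by norm_num)
  have heq1 : eps ^ 2 + eps + 1 = 0 := by
    have hfac : (eps - 1) * (eps ^ 2 + eps + 1) = 0 := by linear_combination h3
    rcases mul_eq_zero.mp hfac with h | h
    · exact absurd (sub_eq_zero.mp h) hne1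
    · exact h
  have hs0 : s ≠ 0 := by intro h; rw [h] at hs; norm_num at hs
  have heps0 : eps ≠ 0 := by intro h; rw [h] at h3; norm_num at h3
  simp only [onHesse] at hE
  constructor
  · rintro ⟨t, ht, hpt⟩
    simp only [tau3, Prod.mk.injEq] at hpt
    obtain ⟨e1, e2, e3⟩ := hpt
    by_cases hab : a = b
    · subst hab
      right
      have ha : a ≠ 0 := by
        intro h0
        subst h0
        have hc : t * c = 0 := by linear_combination -e1 - t * 0 * heq1
        have hc0 : c = 0 := by
          rcases mul_eq_zero.mp hc with h | h
          · exact absurd h ht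
          · exact h
        exact hne (by simp [hc0])
      have e1' : a = t * (c - a) := by linear_combination e1 + t * a * heq1
      have q : c ^ 2 - 2 * a * c - 2 * a ^ 2 = 0 := by
        linear_combination (c - a) * e3 - (2 * a + c) * e1'
      have hkey : a ^ 2 * (c - (1 + s) * a) = 0 := by
        linear_combination (-(1 + s) / 6) * hE + ((1 + s) * (c + 2 * a) / 6) * q
          - (a ^ 2 * c / 2) * hs
      have hc : c = (1 + s) * a := by
        rcases mul_eq_zero.mp hkey with h | h
        · exact absurd h (pow_ne_zero 2 ha)
        · exact sub_eq_zero.mp h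
      subst hc
      refine ⟨a⁻¹, inv_ne_zero ha, ?_⟩
      simp only [Prod.mk.injEq]
      refine ⟨?_, ?_, ?_⟩ <;> field_simp <;> ring
    · left
      have hab' : a - b ≠ 0 := sub_ne_zero.mpr hab
      have hfac : (a - b) * (t * (eps ^ 2 - eps) - 1) = 0 := by
        linear_combination e2 - e1
      have ht3 : t * (eps ^ 2 - eps) = 1 := by
        rcases mul_eq_zero.mp hfac with h | h
        · exact absurd h hab'
        · linear_combination h
      have ht2 : 3 * t ^ 2 = -1 := by
        linear_combination (-(t * (eps ^ 2 - eps) + 1)) * ht3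
          + t ^ 2 * (eps - 2) * h3 + t ^ 2 * heq1
      have ev : a + b = t * (2 * c - (a + b)) := by
        linear_combination e1 + e2 + t * (a + b) * heq1
      have hc2 : 2 * c = 0 := by
        linear_combination (1 + t) * e3 + t * ev + c * ht2
      have hc0 : c = 0 := by linear_combination hc2 / 2
      subst hc0
      have htv : t * (a + b) = 0 := by linear_combination -e3
      have hv : a + b = 0 := by
        rcases mul_eq_zero.mp htv with h | h
        · exact absurd h ht
        · exact h
      have hb : b = -a := by linear_combination hv
      subst hb
      have ha : a ≠ 0 := by intro h; exact hab (by rw [h]; ring)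
      refine ⟨a⁻¹, inv_ne_zero ha, ?_⟩
      simp only [oE, Prod.mk.injEq]
      refine ⟨?_, ?_, ?_⟩ <;> field_simp <;> ring
  · have hd : eps ^ 2 - eps ≠ 0 := by
      intro h
      have : eps * (eps - 1) = 0 := by linear_combination h
      rcases mul_eq_zero.mp this with h' | h'
      · exact heps0 h'
      · exact hne1 (sub_eq_zero.mp h')
    rintro (⟨t, ht, hpt⟩ | ⟨t, ht, hpt⟩) <;>
      simp only [oE, Prod.mk.injEq] at hpt <;> obtain ⟨f1, f2, f3⟩ := hpt
    · have ha : a ≠ 0 := by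
        intro h; rw [h, mul_zero] at f1; exact one_ne_zero f1
      have hc0 : c = 0 := by
        rcases mul_eq_zero.mp f3.symm with h | h
        · exact absurd h ht
        · exact h
      have hba : t * (b + a) = 0 := by linear_combination -f1 - f2
      have hb : b = -a := by
        rcases mul_eq_zero.mp hba with h | h
        · exact absurd h ht
        · linear_combination h
      subst hc0; subst hb
      refine ⟨(eps ^ 2 - eps)⁻¹, inv_ne_zero hd, ?_⟩
      simp only [tau3, Prod.mk.injEq]
      refine ⟨?_, ?_, ?_⟩ <;> field_simp <;> ring
    · have ha : a ≠ 0 := by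
        intro h; rw [h, mul_zero] at f1; exact one_ne_zero f1
      have hb : b = a := by
        have : t * (b - a) = 0 := by linear_combination f1 - f2
        rcases mul_eq_zero.mp this with h | h
        · exact absurd h ht
        · linear_combination h
      have hc : c = (1 + s) * a := by
        have : t * (c - (1 + s) * a) = 0 := by linear_combination (1 + s) * f1 - f3
        rcases mul_eq_zero.mp this with h | h
        · exact absurd h ht
        · linear_combination h
      subst hc
      refine ⟨s⁻¹, inv_ne_zero hs0, ?_⟩
      simp only [tau3, Prod.mk.injEq]
      rw [hb]
      refine ⟨?_, ?_, ?_⟩ <;> field_simp <;>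
        first
          | linear_combination a * heq1
          | linear_combination (-a) * heq1
          | linear_combination a * hs
          | linear_combination (-a) * hs
          | linear_combination (-1 : k) * heq1
          | linear_combination hs
          | ring
end
end

section
/- Let E be an elliptic curve with a group automorphism τ and i ≥ 0 such that the fixed subgroup E_{τ^i} = {p : τ^i(p) = p} is contained in E[2]. Then U_{τ^i} := {p ∈ E : p - τ^i(p) ∈ E[3]} equals the internal direct sum E_{τ^i} ⊕ E[3]. -/
/-- Let `E` be an elliptic curve (an abelian group) with a group automorphism
`τ`, and `i ≥ 0` such that the fixed subgroup `E_{τ^i}` is contained in `E[2]`.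
Then `U_{τ^i} = {p : p - τ^i(p) ∈ E[3]}` is the internal direct sum
`E_{τ^i} ⊕ E[3]`: the two subgroups intersect trivially and `U_{τ^i}` is their
sum. -/
theorem U_eq_fixed_directSum_threeTorsion {E : Type*} [AddCommGroup E]
    (τ : AddAut E) (i : ℕ) (hfix : ∀ p : E, (i • τ) p = p → 2 • p = 0) :
    (∀ p : E, (i • τ) p = p → 3 • p = 0 → p = 0) ∧
    {p : E | p - (i • τ) p ∈ {q : E | 3 • q = 0}} =
      {p : E | ∃ q r : E, (i • τ) q = q ∧ 3 • r = 0 ∧ p = q + r} := by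
  constructor
  · intro p hp h3
    have h2 := hfix p hp
    have key : (3 : ℕ) • p - (2 : ℕ) • p = p := by abel
    rw [← key, h3, h2, sub_zero]
  · ext p
    simp only [Set.mem_setOf_eq]
    constructor
    · intro h
      have hq : (i • τ) ((3 : ℕ) • p) = (3 : ℕ) • p := by
        rw [map_nsmul]
        have h0 : (3 : ℕ) • p - (3 : ℕ) • (i • τ) p = 0 := by
          rw [← smul_sub]; exact h
        linear_combination (norm := abel) -h0
      have h6 : (2 : ℕ) • ((3 : ℕ) • p) = 0 := hfix _ hq
      refine ⟨(3 : ℕ) • p, -((2 : ℕ) • p), hq, ?_, ?_⟩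
      · rw [smul_neg, neg_eq_zero, smul_comm]; exact h6
      · have key : (3 : ℕ) • p - (2 : ℕ) • p = p := by abel
        rw [← sub_eq_add_neg, key]
    · rintro ⟨q, r, hq, hr, rfl⟩
      have key : (q + r) - (i • τ) (q + r) = r - (i • τ) r := by
        rw [map_add, hq]; abel
      rw [key, smul_sub, hr, ← map_nsmul, hr, map_zero, sub_zero]
end

section
/- Let E = V(x^3+y^3+z^3), and let η be a primitive 9th root of unity. A point p = (a:b:1) ∈ E with ab ≠ 0 satisfies 3p ∈ {(1:-1:0),(1:-η^3:0),(1:-η^6:0)} (the fixed set of τ2^2) if and only if a^6 + a^3 + 1 = 0, equivalently (a^3,b^3) = (η^3,η^6) or (a^3,b^3) = (η^6,η^3). -/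
open scoped Classical

noncomputable section

variable {k : Type*} [Field k]

lemma myHesseAdd_eq1 {k : Type*} [Field k] {p q r : Pt k} (h : add1 p q = r)
    (hr : r ≠ (0, 0, 0)) : hesseAdd p q = r := by
  have hne : add1 p q ≠ (0, 0, 0) := by rw [h]; exact hr
  rw [hesseAdd, if_pos hne]; exact h

lemma myHesseAdd_eq2 {k : Type*} [Field k] {p q : Pt k} (h : add1 p q = (0, 0, 0)) :
    hesseAdd p q = add2 p q := by
  rw [hesseAdd, if_neg (not_not.mpr h)]

/-- Let `E = V(x³+y³+z³)` and `η` a primitive 9th root of unity. A point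
`p = (a:b:1) ∈ E` with `ab ≠ 0` satisfies
`3p ∈ {(1:-1:0), (1:-η³:0), (1:-η⁶:0)}` (the fixed set of `τ₂²`) if and only if
`a⁶ + a³ + 1 = 0`, equivalently `(a³,b³) = (η³,η⁶)` or `(a³,b³) = (η⁶,η³)`. -/
theorem fermat_triple_in_fixed_iff {k : Type*} [Field k] [IsAlgClosed k] [CharZero k]
    (eta : k) (heta : IsPrimitiveRoot eta 9) (a b : k) (hab : a * b ≠ 0)
    (hE : onHesse (0 : k) ((a, b, 1) : Pt k)) :
    ((projEq (nP 3 ((a, b, 1) : Pt k)) ((1, -1, 0) : Pt k) ∨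
      projEq (nP 3 ((a, b, 1) : Pt k)) ((1, -eta ^ 3, 0) : Pt k) ∨
      projEq (nP 3 ((a, b, 1) : Pt k)) ((1, -eta ^ 6, 0) : Pt k)) ↔
        a ^ 6 + a ^ 3 + 1 = 0) ∧
    (a ^ 6 + a ^ 3 + 1 = 0 ↔
      ((a ^ 3 = eta ^ 3 ∧ b ^ 3 = eta ^ 6) ∨ (a ^ 3 = eta ^ 6 ∧ b ^ 3 = eta ^ 3))) := by
  have ha : a ≠ 0 := left_ne_zero_of_mul hab
  have hb : b ≠ 0 := right_ne_zero_of_mul hab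
  have h3k : (3 : k) ≠ 0 := by norm_num
  have he : a ^ 3 + b ^ 3 + 1 = 0 := by
    have h := hE; simp only [onHesse] at h; linear_combination h
  have h9 : eta ^ 9 = 1 := heta.pow_eq_one
  have h3ne1 : eta ^ 3 ≠ 1 := heta.pow_ne_one_of_pos_of_lt (by norm_num) (by norm_num)
  have hcube : eta ^ 6 + eta ^ 3 + 1 = 0 := by
    have h0 : (eta ^ 3 - 1) * (eta ^ 6 + eta ^ 3 + 1) = 0 := by linear_combination h9
    exact (mul_eq_zero.mp h0).resolve_left (sub_ne_zero.mpr h3ne1)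
  have part2 : a ^ 6 + a ^ 3 + 1 = 0 ↔
      ((a ^ 3 = eta ^ 3 ∧ b ^ 3 = eta ^ 6) ∨ (a ^ 3 = eta ^ 6 ∧ b ^ 3 = eta ^ 3)) := by
    constructor
    · intro h6
      have hf : (a ^ 3 - eta ^ 3) * (a ^ 3 - eta ^ 6) = 0 := by
        linear_combination h6 - a ^ 3 * hcube + h9
      rcases mul_eq_zero.mp hf with h | h
      · have hc : a ^ 3 = eta ^ 3 := sub_eq_zero.mp h
        exact Or.inl ⟨hc, by linear_combination he - hc - hcube⟩
      · have hc : a ^ 3 = eta ^ 6 := sub_eq_zero.mp h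
        exact Or.inr ⟨hc, by linear_combination he - hc - hcube⟩
    · rintro (⟨h1, _⟩ | ⟨h1, _⟩)
      · linear_combination (a ^ 3 + eta ^ 3) * h1 + h1 + hcube
      · linear_combination (a ^ 3 + eta ^ 6) * h1 + h1 + hcube + eta ^ 3 * h9
  have hnp : ∀ (n : ℕ) (p : Pt k), nP (n + 1) p = hesseAdd (nP n p) p := fun n p => rfl
  have h1p : nP 1 ((a, b, 1) : Pt k) = (-a, -b, -1) := by
    rw [show (1 : ℕ) = 0 + 1 from rfl, hnp, show (nP 0 ((a, b, 1) : Pt k)) = oE from rfl]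
    apply myHesseAdd_eq1
    · show ((1 : k) * 0 * b ^ 2 - (-1) ^ 2 * a * 1, (-1) * 0 * a ^ 2 - 1 ^ 2 * b * 1,
        1 * (-1) * 1 ^ 2 - 0 ^ 2 * a * b) = (-a, -b, -1)
      rw [Prod.mk.injEq, Prod.mk.injEq]
      refine ⟨by ring, by ring, by ring⟩
    · intro hc
      rw [Prod.mk.injEq, Prod.mk.injEq] at hc
      exact one_ne_zero (neg_eq_zero.mp hc.2.2)
  have h2p : nP 2 ((a, b, 1) : Pt k) = (a ^ 3 * b - b, a - a * b ^ 3, b ^ 3 - a ^ 3) := by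
    have hz1 : add1 ((-a, -b, -1) : Pt k) ((a, b, 1) : Pt k) = (0, 0, 0) := by
      show ((-a) * (-1) * b ^ 2 - (-b) ^ 2 * a * 1, (-b) * (-1) * a ^ 2 - (-a) ^ 2 * b * 1,
        (-a) * (-b) * 1 ^ 2 - (-1) ^ 2 * a * b) = (0, 0, 0)
      rw [Prod.mk.injEq, Prod.mk.injEq]
      refine ⟨by ring, by ring, by ring⟩
    rw [show (2 : ℕ) = 1 + 1 from rfl, hnp, h1p, myHesseAdd_eq2 hz1]
    show ((-a) * (-b) * a ^ 2 - (-1) ^ 2 * b * 1, (-a) * (-1) * 1 ^ 2 - (-b) ^ 2 * a * b,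
      (-b) * (-1) * b ^ 2 - (-a) ^ 2 * a * 1) = _
    rw [Prod.mk.injEq, Prod.mk.injEq]
    refine ⟨by ring, by ring, by ring⟩
  have hXne : a ^ 6 + a ^ 3 + 1 = 0 → a ^ 9 - 3 * a ^ 6 - 6 * a ^ 3 - 1 ≠ 0 := by
    intro h6 hx
    have h1 : (3 : k) * (a ^ 3 * (a ^ 3 + 2)) = 0 := by
      linear_combination (a ^ 3 - 1) * h6 - hx
    have h2 : a ^ 3 * (a ^ 3 + 2) = 0 := (mul_eq_zero.mp h1).resolve_left h3k
    rcases mul_eq_zero.mp h2 with h | h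
    · exact pow_ne_zero 3 ha h
    · have ha3 : a ^ 3 = -2 := by linear_combination h
      rw [show a ^ 6 = (a ^ 3) ^ 2 by ring, ha3] at h6
      norm_num at h6
  have hZH : ∀ t : k, t ≠ 0 → t * -(3 * a * b * (a ^ 6 + a ^ 3 + 1)) = 0 →
      a ^ 6 + a ^ 3 + 1 = 0 := by
    intro t ht hz
    have h0 : -(3 * a * b * (a ^ 6 + a ^ 3 + 1)) = 0 := (mul_eq_zero.mp hz).resolve_left ht
    have h1 : (3 * a * b) * (a ^ 6 + a ^ 3 + 1) = 0 := by linear_combination -h0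
    exact (mul_eq_zero.mp h1).resolve_left (mul_ne_zero (mul_ne_zero h3k ha) hb)
  have hadd : add1 ((a ^ 3 * b - b, a - a * b ^ 3, b ^ 3 - a ^ 3) : Pt k) ((a, b, 1) : Pt k)
      = (a ^ 9 - 3 * a ^ 6 - 6 * a ^ 3 - 1, -a ^ 9 - 6 * a ^ 6 - 3 * a ^ 3 + 1,
          -(3 * a * b * (a ^ 6 + a ^ 3 + 1))) := by
    show ((a ^ 3 * b - b) * (b ^ 3 - a ^ 3) * b ^ 2 - (a - a * b ^ 3) ^ 2 * a * 1,
      (a - a * b ^ 3) * (b ^ 3 - a ^ 3) * a ^ 2 - (a ^ 3 * b - b) ^ 2 * b * 1,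
      (a ^ 3 * b - b) * (a - a * b ^ 3) * 1 ^ 2 - (b ^ 3 - a ^ 3) ^ 2 * a * b) = _
    rw [Prod.mk.injEq, Prod.mk.injEq]
    refine ⟨by linear_combination (1 - b ^ 3 + 4 * a ^ 3 - a ^ 6) * he,
      by linear_combination (-1 + 4 * a ^ 3 - a ^ 3 * b ^ 3 + a ^ 6) * he,
      by linear_combination (2 * a * b - a * b ^ 4 + 2 * a ^ 4 * b) * he⟩
  have hne3 : ((a ^ 9 - 3 * a ^ 6 - 6 * a ^ 3 - 1, -a ^ 9 - 6 * a ^ 6 - 3 * a ^ 3 + 1,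
      -(3 * a * b * (a ^ 6 + a ^ 3 + 1))) : Pt k) ≠ (0, 0, 0) := by
    intro hc
    rw [Prod.mk.injEq, Prod.mk.injEq] at hc
    obtain ⟨hx, _, hz⟩ := hc
    by_cases h6 : a ^ 6 + a ^ 3 + 1 = 0
    · exact hXne h6 hx
    · exact h6 (hZH 1 one_ne_zero (by rw [one_mul]; exact hz))
  have h3p : nP 3 ((a, b, 1) : Pt k) = (a ^ 9 - 3 * a ^ 6 - 6 * a ^ 3 - 1,
      -a ^ 9 - 6 * a ^ 6 - 3 * a ^ 3 + 1, -(3 * a * b * (a ^ 6 + a ^ 3 + 1))) := by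
    rw [show (3 : ℕ) = 2 + 1 from rfl, hnp, h2p]
    exact myHesseAdd_eq1 hadd hne3
  have fwd : ∀ w : k, projEq (nP 3 ((a, b, 1) : Pt k)) ((1, w, 0) : Pt k) →
      a ^ 6 + a ^ 3 + 1 = 0 := by
    intro w hw
    rw [h3p] at hw
    simp only [projEq] at hw
    obtain ⟨t, ht, heq⟩ := hw
    have hz : (0 : k) = t * -(3 * a * b * (a ^ 6 + a ^ 3 + 1)) :=
      congrArg (fun r : Pt k => r.2.2) heq
    exact hZH t ht hz.symm
  have hY : (-a ^ 9 - 6 * a ^ 6 - 3 * a ^ 3 + 1 : k) =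
      -a ^ 6 * (a ^ 9 - 3 * a ^ 6 - 6 * a ^ 3 - 1) ∨ True := Or.inr trivial
  refine ⟨⟨?_, ?_⟩, part2⟩
  · rintro (h | h | h)
    · exact fwd _ h
    · exact fwd _ h
    · exact fwd _ h
  · intro h6
    have hx0 : a ^ 9 - 3 * a ^ 6 - 6 * a ^ 3 - 1 ≠ 0 := hXne h6
    have hYv : (-a ^ 9 - 6 * a ^ 6 - 3 * a ^ 3 + 1 : k) =
        -a ^ 6 * (a ^ 9 - 3 * a ^ 6 - 6 * a ^ 3 - 1) := by
      linear_combination (a ^ 9 - 4 * a ^ 6 - 4 * a ^ 3 + 1) * h6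
    rcases part2.mp h6 with ⟨hc, _⟩ | ⟨hc, _⟩
    · -- a^3 = eta^3, so a^6 = eta^6 : third case
      refine Or.inr (Or.inr ?_)
      rw [h3p]
      simp only [projEq]
      refine ⟨(a ^ 9 - 3 * a ^ 6 - 6 * a ^ 3 - 1)⁻¹, inv_ne_zero hx0, ?_⟩
      have h66 : eta ^ 6 = a ^ 6 := by linear_combination (-(a ^ 3) - eta ^ 3) * hc
      rw [Prod.mk.injEq, Prod.mk.injEq]
      refine ⟨(inv_mul_cancel₀ hx0).symm, ?_, ?_⟩
      · rw [h66, hYv]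
        rw [mul_comm (-a ^ 6), inv_mul_cancel_left₀ hx0]
      · rw [h6]
        ring
    · -- a^3 = eta^6, so a^6 = eta^3 : second case
      refine Or.inr (Or.inl ?_)
      rw [h3p]
      simp only [projEq]
      refine ⟨(a ^ 9 - 3 * a ^ 6 - 6 * a ^ 3 - 1)⁻¹, inv_ne_zero hx0, ?_⟩
      have h66 : eta ^ 3 = a ^ 6 := by
        linear_combination (-(a ^ 3) - eta ^ 6) * hc - eta ^ 3 * h9
      rw [Prod.mk.injEq, Prod.mk.injEq]
      refine ⟨(inv_mul_cancel₀ hx0).symm, ?_, ?_⟩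
      · rw [h66, hYv]
        rw [mul_comm (-a ^ 6), inv_mul_cancel_left₀ hx0]
      · rw [h6]
        ring
end
end

section
/- Let E = V(x^3+y^3+z^3). The 2-torsion points of E other than o_E = (1:-1:0) are exactly (1:1:-∛2), (1:1:-∛2·ε), (1:1:-∛2·ε^2), where ε is a primitive 3rd root of unity, and these three points form a single orbit under the cyclic group generated by τ2(a:b:c) = (b:a:cε). -/
open scoped Classical

noncomputable section

variable {k : Type*} [Field k]

section FermatHelpers

variable {k : Type*} [Field k]

lemma projEq_oE_iff' (a b c : k) :
    projEq ((a, b, c) : Pt k) (oE : Pt k) ↔ a ≠ 0 ∧ b = -a ∧ c = 0 := by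
  constructor
  · rintro ⟨t, ht, h⟩
    simp only [oE, Prod.mk.injEq] at h
    obtain ⟨h1, h2, h3⟩ := h
    have ha : a ≠ 0 := by
      rintro rfl
      rw [mul_zero] at h1
      exact one_ne_zero h1
    refine ⟨ha, ?_, ?_⟩
    · have : t * b = t * (-a) := by rw [mul_neg, ← h1]; exact h2.symm
      exact mul_left_cancel₀ ht this
    · have : t * c = t * 0 := by rw [mul_zero]; exact h3.symm
      exact mul_left_cancel₀ ht this
  · rintro ⟨ha, hb, hc⟩
    refine ⟨a⁻¹, inv_ne_zero ha, ?_⟩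
    rw [oE]
    simp only [Prod.mk.injEq]
    rw [hb, hc]
    refine ⟨?_, ?_, ?_⟩ <;> field_simp <;> ring

lemma projEq_pt_iff' (a b c x : k) :
    projEq ((a, b, c) : Pt k) ((1, 1, x) : Pt k) ↔ a ≠ 0 ∧ b = a ∧ c = x * a := by
  constructor
  · rintro ⟨t, ht, h⟩
    simp only [Prod.mk.injEq] at h
    obtain ⟨h1, h2, h3⟩ := h
    have ha : a ≠ 0 := by
      rintro rfl
      rw [mul_zero] at h1
      exact one_ne_zero h1
    refine ⟨ha, ?_, ?_⟩
    · have : t * b = t * a := by rw [← h1]; exact h2.symm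
      exact mul_left_cancel₀ ht this
    · have : t * c = t * (x * a) := by
        rw [show t * (x * a) = x * (t * a) by ring, ← h1, mul_one]
        exact h3.symm
      exact mul_left_cancel₀ ht this
  · rintro ⟨ha, hb, hc⟩
    refine ⟨a⁻¹, inv_ne_zero ha, ?_⟩
    simp only [Prod.mk.injEq]
    rw [hb, hc]
    refine ⟨?_, ?_, ?_⟩ <;> field_simp

lemma projEq_oE_of (A : k) (hA : A ≠ 0) : projEq ((A, -A, 0) : Pt k) (oE : Pt k) := by
  refine ⟨A⁻¹, inv_ne_zero hA, ?_⟩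
  rw [oE]
  simp only [Prod.mk.injEq]
  refine ⟨?_, ?_, ?_⟩ <;> field_simp <;> ring

lemma cube_factor (eps : k) (h1 : eps ^ 3 = 1) (h2 : 1 + eps + eps ^ 2 = 0)
    (x y : k) (h : x ^ 3 = y ^ 3) :
    x = y ∨ x = eps * y ∨ x = eps ^ 2 * y := by
  have key : (x - y) * (x - eps * y) * (x - eps ^ 2 * y) = 0 := by
    linear_combination h + (eps * x * y ^ 2 - x ^ 2 * y) * h2 - y ^ 3 * h1
  rcases mul_eq_zero.mp key with h' | h'
  · rcases mul_eq_zero.mp h' with h'' | h''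
    · exact Or.inl (sub_eq_zero.mp h'')
    · exact Or.inr (Or.inl (sub_eq_zero.mp h''))
  · exact Or.inr (Or.inr (sub_eq_zero.mp h'))

lemma nP_two_eq (a b c : k) (hp : ¬(a = 0 ∧ b = 0 ∧ c = 0))
    (hcur : a ^ 3 + b ^ 3 + c ^ 3 = 0) :
    ∃ s : k, s ≠ 0 ∧ nP 2 ((a, b, c) : Pt k) =
      (s * (b * (a ^ 3 - c ^ 3)), s * (a * (c ^ 3 - b ^ 3)), s * (c * (b ^ 3 - a ^ 3))) := by
  obtain ⟨u, hu, h1⟩ : ∃ u : k, u ≠ 0 ∧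
      hesseAdd (oE : Pt k) (a, b, c) = (u * a, u * b, u * c) := by
    by_cases hc : c = 0
    · have ha : a ≠ 0 := by
        rintro rfl
        refine hp ⟨rfl, ?_, hc⟩
        have hb3 : b ^ 3 = 0 := by
          subst hc
          linear_combination hcur
        exact pow_eq_zero_iff (by norm_num) |>.mp hb3
      refine ⟨-a, neg_ne_zero.mpr ha, ?_⟩
      have hadd1 : add1 (oE : Pt k) (a, b, c) = (0, 0, 0) := by
        subst hc
        simp only [add1, oE, Prod.mk.injEq]
        refine ⟨by ring, by ring, by ring⟩
      rw [hesseAdd, if_neg (fun h => h hadd1), add2, oE]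
      subst hc
      simp only [Prod.mk.injEq]
      refine ⟨by ring, by ring, by ring⟩
    · refine ⟨-c, neg_ne_zero.mpr hc, ?_⟩
      have hadd1 : add1 (oE : Pt k) (a, b, c) = (-c * a, -c * b, -c * c) := by
        simp only [add1, oE, Prod.mk.injEq]
        refine ⟨by ring, by ring, by ring⟩
      have hne : add1 (oE : Pt k) (a, b, c) ≠ (0, 0, 0) := by
        rw [hadd1]
        intro h
        simp only [Prod.mk.injEq] at h
        have h3 := h.2.2
        rw [neg_mul, neg_eq_zero] at h3
        exact hc (mul_self_eq_zero.mp h3)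
      rw [hesseAdd, if_pos hne, hadd1]
  have h2 : nP 2 ((a, b, c) : Pt k) = hesseAdd ((u * a, u * b, u * c) : Pt k) (a, b, c) := by
    show hesseAdd (hesseAdd (oE : Pt k) (a, b, c)) (a, b, c) = _
    rw [h1]
  refine ⟨u ^ 2, pow_ne_zero 2 hu, ?_⟩
  rw [h2]
  have hadd1 : add1 ((u * a, u * b, u * c) : Pt k) (a, b, c) = (0, 0, 0) := by
    simp only [add1, Prod.mk.injEq]
    refine ⟨by ring, by ring, by ring⟩
  rw [hesseAdd, if_neg (fun h => h hadd1), add2]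
  simp only [Prod.mk.injEq]
  refine ⟨by ring, by ring, by ring⟩

end FermatHelpers

/-- The 2-torsion points of the Fermat cubic `E = V(x³+y³+z³)` other than
`o_E = (1:-1:0)` are exactly `(1:1:-∛2)`, `(1:1:-∛2·ε)`, `(1:1:-∛2·ε²)`
(`ε` a primitive 3rd root of unity, `∛2` a cube root of 2), and these three
points form a single orbit under the cyclic group generated by
`τ₂(a:b:c) = (b:a:cε)`. -/
theorem fermat_two_torsion {k : Type*} [Field k] [IsAlgClosed k] [CharZero k]
    (eps r : k) (heps : IsPrimitiveRoot eps 3) (hr : r ^ 3 = 2) :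
    (∀ p : Pt k, p ≠ (0, 0, 0) → onHesse (0 : k) p →
      ((isTor 2 p ∧ ¬ projEq p (oE : Pt k)) ↔
        (projEq p ((1, 1, -r) : Pt k) ∨ projEq p ((1, 1, -(r * eps)) : Pt k) ∨
          projEq p ((1, 1, -(r * eps ^ 2)) : Pt k)))) ∧
    projEq (tau2 eps ((1, 1, -r) : Pt k)) ((1, 1, -(r * eps)) : Pt k) ∧
    projEq (tau2 eps ((1, 1, -(r * eps)) : Pt k)) ((1, 1, -(r * eps ^ 2)) : Pt k) ∧
    projEq (tau2 eps ((1, 1, -(r * eps ^ 2)) : Pt k)) ((1, 1, -r) : Pt k) := by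
  have h3 : eps ^ 3 = 1 := heps.pow_eq_one
  have hene : eps ≠ 1 := heps.ne_one (by norm_num)
  have hsum : 1 + eps + eps ^ 2 = 0 := by
    have hfac : (eps - 1) * (1 + eps + eps ^ 2) = 0 := by linear_combination h3
    rcases mul_eq_zero.mp hfac with h | h
    · exact absurd (sub_eq_zero.mp h) hene
    · exact h
  refine ⟨?_, ?_, ?_, ?_⟩
  · intro p hp honh
    obtain ⟨a, b, c⟩ := p
    have hp' : ¬(a = 0 ∧ b = 0 ∧ c = 0) := by
      intro h
      exact hp (by simp [Prod.ext_iff, h.1, h.2.1, h.2.2])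
    have hcur : a ^ 3 + b ^ 3 + c ^ 3 = 0 := by
      have h := honh
      simp only [onHesse] at h
      linear_combination h
    obtain ⟨s, hs, hnp⟩ := nP_two_eq a b c hp' hcur
    constructor
    · rintro ⟨⟨t, ht, htor⟩, hnoe⟩
      rw [hnp] at htor
      simp only [oE, Prod.mk.injEq] at htor
      obtain ⟨e1, e2, e3⟩ := htor
      have hts : t * s ≠ 0 := mul_ne_zero ht hs
      have hX : b * (a ^ 3 - c ^ 3) ≠ 0 := by
        intro h
        rw [h, mul_zero, mul_zero] at e1
        exact one_ne_zero e1
      have hEq : a * (c ^ 3 - b ^ 3) = -(b * (a ^ 3 - c ^ 3)) := by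
        have h : (t * s) * (a * (c ^ 3 - b ^ 3)) = (t * s) * (-(b * (a ^ 3 - c ^ 3))) := by
          linear_combination -e2 - e1
        exact mul_left_cancel₀ hts h
      have hz : c * (b ^ 3 - a ^ 3) = 0 := by
        rcases mul_eq_zero.mp e3.symm with h' | h'
        · exact absurd h' ht
        rcases mul_eq_zero.mp h' with h'' | h''
        · exact absurd h'' hs
        · exact h''
      have hb : b ≠ 0 := fun h => hX (by rw [h, zero_mul])
      by_cases hcz : c = 0
      · subst hcz
        have ha : a ≠ 0 := by
          rintro rfl
          have hb3 : b ^ 3 = 0 := by linear_combination hcur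
          exact hb (pow_eq_zero_iff (by norm_num) |>.mp hb3)
        have hfac : a * b * ((b - a) * (b + a)) = 0 := by linear_combination -hEq
        rcases mul_eq_zero.mp hfac with h' | h'
        · exact absurd h' (mul_ne_zero ha hb)
        rcases mul_eq_zero.mp h' with h'' | h''
        · exfalso
          have hba : b = a := sub_eq_zero.mp h''
          subst hba
          have ha3 : b ^ 3 = 0 := by linear_combination hcur / 2
          exact ha (pow_eq_zero_iff (by norm_num) |>.mp ha3)
        · exfalso
          have hba : b = -a := by linear_combination h''
          exact hnoe ((projEq_oE_iff' a b 0).mpr ⟨ha, hba, rfl⟩)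
      · have hb3 : b ^ 3 = a ^ 3 := by
          have := (mul_eq_zero.mp hz).resolve_left hcz
          linear_combination this
        have ha : a ≠ 0 := by
          rintro rfl
          apply hb
          have : b ^ 3 = 0 := by rw [hb3]; ring
          exact pow_eq_zero_iff (by norm_num) |>.mp this
        have hc3 : c ^ 3 = -2 * a ^ 3 := by linear_combination hcur - hb3
        have hfac : (a ^ 3 - c ^ 3) * (b - a) = 0 := by linear_combination hEq + a * hb3
        have h3a : a ^ 3 - c ^ 3 ≠ 0 := by
          rw [hc3]
          intro h
          apply ha
          have h9 : (3 : k) * a ^ 3 = 0 := by linear_combination h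
          have ha3 : a ^ 3 = 0 := by
            rcases mul_eq_zero.mp h9 with h' | h'
            · exact absurd h' (by norm_num)
            · exact h'
          exact pow_eq_zero_iff (by norm_num) |>.mp ha3
        have hba : b = a := sub_eq_zero.mp ((mul_eq_zero.mp hfac).resolve_left h3a)
        have hcc : c ^ 3 = (-r * a) ^ 3 := by linear_combination hc3 + a ^ 3 * hr
        rcases cube_factor eps h3 hsum c (-r * a) hcc with h | h | h
        · exact Or.inl ((projEq_pt_iff' a b c (-r)).mpr ⟨ha, hba, by linear_combination h⟩)
        · exact Or.inr (Or.inl ((projEq_pt_iff' a b c (-(r * eps))).mpr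
            ⟨ha, hba, by linear_combination h⟩))
        · exact Or.inr (Or.inr ((projEq_pt_iff' a b c (-(r * eps ^ 2))).mpr
            ⟨ha, hba, by linear_combination h⟩))
    · have key : ∀ x : k, x ^ 3 = -2 → a ≠ 0 → b = a → c = x * a →
          isTor 2 ((a, b, c) : Pt k) ∧ ¬ projEq ((a, b, c) : Pt k) (oE : Pt k) := by
        intro x hx ha hba hc
        subst hba; subst hc
        constructor
        · rw [isTor, hnp]
          have hA : s * (b * (b ^ 3 - (x * b) ^ 3)) = s * (3 * b ^ 4) := by
            linear_combination -s * b ^ 4 * hx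
          have hB : s * (b * ((x * b) ^ 3 - b ^ 3)) = -(s * (3 * b ^ 4)) := by
            linear_combination s * b ^ 4 * hx
          have hC : s * (x * b * (b ^ 3 - b ^ 3)) = 0 := by ring
          rw [hA, hB, hC]
          exact projEq_oE_of _ (mul_ne_zero hs (by
            intro h
            apply ha
            have h9 : (3 : k) * b ^ 4 = 0 := by linear_combination h
            rcases mul_eq_zero.mp h9 with h' | h'
            · exact absurd h' (by norm_num)
            · exact pow_eq_zero_iff (by norm_num) |>.mp h'))
        · rw [projEq_oE_iff']
          rintro ⟨_, hba', -⟩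
          apply ha
          have h2a : (2 : k) * b = 0 := by linear_combination hba'
          rcases mul_eq_zero.mp h2a with h' | h'
          · exact absurd h' (by norm_num)
          · exact h'
      rintro (h | h | h)
      · obtain ⟨ha, hba, hc⟩ := (projEq_pt_iff' a b c (-r)).mp h
        exact key (-r) (by linear_combination -hr) ha hba hc
      · obtain ⟨ha, hba, hc⟩ := (projEq_pt_iff' a b c (-(r * eps))).mp h
        exact key (-(r * eps)) (by linear_combination -eps ^ 3 * hr - 2 * h3) ha hba hc
      · obtain ⟨ha, hba, hc⟩ := (projEq_pt_iff' a b c (-(r * eps ^ 2))).mp h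
        exact key (-(r * eps ^ 2)) (by linear_combination -eps ^ 6 * hr - (2 * eps ^ 3 + 2) * h3)
          ha hba hc
  · refine ⟨1, one_ne_zero, ?_⟩
    simp only [tau2, Prod.mk.injEq]
    refine ⟨by ring, by ring, by ring⟩
  · refine ⟨1, one_ne_zero, ?_⟩
    simp only [tau2, Prod.mk.injEq]
    refine ⟨by ring, by ring, by ring⟩
  · refine ⟨1, one_ne_zero, ?_⟩
    simp only [tau2, Prod.mk.injEq]
    refine ⟨by ring, by ring, by linear_combination r * h3⟩
end
end

section
/- Let w_p = a(xyz+yzx+zxy)+b(xzy+yxz+zyx)+c(x^3+y^3+z^3) with λ = 1+√3 and (a:b:c) = (1:1:λ), and τ3 ∈ GL(V) given on basis vectors by τ3(x) = ε^2 x + ε y + z, τ3(y) = ε x + ε^2 y + z, τ3(z) = x + y + z (ε a primitive 3rd root of unity). Then (τ3 ⊗ τ3 ⊗ τ3)(w_p) = 3√3 · w_p; in particular τ3 ∈ Aut(w_p). -/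
noncomputable section

/-- An element of `V ⊗ V ⊗ V` (for `V` 3-dimensional with basis `x₀, x₁, x₂`,
written `x, y, z`) given by its coefficients in the basis `xᵢ ⊗ xⱼ ⊗ xₗ`. -/
abbrev Pot (k : Type*) := Fin 3 → Fin 3 → Fin 3 → k

variable {k : Type*} [Field k]

/-- The basis monomial `xᵢ ⊗ xⱼ ⊗ xₗ`. -/
def mono (i j l : Fin 3) : Pot k :=
  fun a b c => if a = i ∧ b = j ∧ c = l then 1 else 0

/-- The action of `θ ⊗ θ ⊗ θ` on `V ⊗ V ⊗ V`, where `θ ∈ GL(V)` has matrix `M`,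
i.e. `θ(xₐ) = ∑ᵢ M i a • xᵢ`. -/
def actT (M : Matrix (Fin 3) (Fin 3) k) (w : Pot k) : Pot k :=
  fun i j l => ∑ a : Fin 3, ∑ b : Fin 3, ∑ c : Fin 3, M i a * M j b * M l c * w a b c

/-- The Sklyanin potential
`w_p = a(xyz+yzx+zxy) + b(xzy+yxz+zyx) + c(x³+y³+z³)`. -/
def skly (a b c : k) : Pot k :=
  a • (mono 0 1 2 + mono 1 2 0 + mono 2 0 1) +
    b • (mono 0 2 1 + mono 1 0 2 + mono 2 1 0) +
    c • (mono 0 0 0 + mono 1 1 1 + mono 2 2 2)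

set_option maxHeartbeats 1000000 in
/-- Let `λ = 1 + √3`, `w_p` the Sklyanin potential with `(a:b:c) = (1:1:λ)`, and
`τ₃ ∈ GL(V)` given by `τ₃(x) = ε²x + εy + z`, `τ₃(y) = εx + ε²y + z`,
`τ₃(z) = x + y + z` (`ε` a primitive 3rd root of unity). Then
`(τ₃ ⊗ τ₃ ⊗ τ₃)(w_p) = 3√3 · w_p`; in particular `τ₃` is invertible and
`τ₃ ∈ Aut(w_p)`. -/
theorem tau3_in_Aut_skly {k : Type*} [Field k] [IsAlgClosed k] [CharZero k]
    (eps s : k) (heps : IsPrimitiveRoot eps 3) (hs : s ^ 2 = 3) :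
    actT (!![eps ^ 2, eps, 1; eps, eps ^ 2, 1; 1, 1, 1]) (skly 1 1 (1 + s)) =
        (3 * s) • skly (1 : k) 1 (1 + s) ∧
    IsUnit (Matrix.det (!![eps ^ 2, eps, 1; eps, eps ^ 2, 1; 1, 1, 1])) ∧
    (∃ mu : k, mu ≠ 0 ∧
      actT (!![eps ^ 2, eps, 1; eps, eps ^ 2, 1; 1, 1, 1]) (skly 1 1 (1 + s)) =
        mu • skly (1 : k) 1 (1 + s)) := by
  have he3 : eps ^ 3 = 1 := heps.pow_eq_one
  have hne1 : eps ≠ 1 := heps.ne_one (by norm_num)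
  have hq : eps ^ 2 + eps + 1 = 0 := by
    have h : (eps - 1) * (eps ^ 2 + eps + 1) = 0 := by linear_combination he3
    rcases mul_eq_zero.mp h with h' | h'
    · exact absurd (sub_eq_zero.mp h') hne1
    · exact h'
  have hsne : s ≠ 0 := by
    intro h; rw [h] at hs; norm_num at hs
  have hmain : actT (!![eps ^ 2, eps, 1; eps, eps ^ 2, 1; 1, 1, 1]) (skly 1 1 (1 + s)) =
      (3 * s) • skly (1 : k) 1 (1 + s) := by
    funext i j l
    fin_cases i <;> fin_cases j <;> fin_cases l <;>
      simp [actT, skly, mono, Fin.sum_univ_three] <;>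
      first
        | linear_combination (-8 + -2*s + 8*eps + 2*eps*s + -1*eps^3 + -1*eps^3*s + eps^4 + eps^4*s) * hq + (-3) * hs
        | linear_combination (1 + -2*s + eps + 2*eps*s + eps^2) * hq
        | linear_combination (1 + s + -1*eps + -1*eps*s + 2*eps^2 + eps^3 + eps^3*s) * hq
        | linear_combination (1 + s + eps + -1*eps*s + eps^2 + eps^2*s) * hq
        | linear_combination (3 + s) * hq
        | linear_combination (-3 : k) * hs
  refine ⟨hmain, ?_, 3 * s, mul_ne_zero three_ne_zero hsne, hmain⟩
  rw [isUnit_iff_ne_zero]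
  have hd : (!![eps ^ 2, eps, 1; eps, eps ^ 2, 1; 1, 1, 1] : Matrix (Fin 3) (Fin 3) k).det =
      eps ^ 4 - 3 * eps ^ 2 + 2 * eps := by
    rw [Matrix.det_fin_three]
    norm_num [Matrix.vecHead, Matrix.vecTail, Matrix.cons_val_two, Matrix.cons_val_one, Matrix.cons_val_zero]
    ring
  rw [hd]
  intro h
  have h2 : 3 * eps * (1 - eps) = 0 := by linear_combination h - eps * he3
  rcases mul_eq_zero.mp h2 with h' | h'
  · have : eps = 0 := by
      rcases mul_eq_zero.mp h' with h3 | h3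
      · exact absurd h3 (by norm_num)
      · exact h3
    exact heps.ne_zero (by norm_num) this
  · exact hne1 (by linear_combination -h')
end
end

section
/- Let E = V(x^3+y^3+z^3) and τ2(a:b:c) = (b:a:cε), and let w_p be the Sklyanin potential with coefficients (a:b:c), p = (a:b:c) ∈ E not 3-torsion. Then neither τ2 nor τ2^2 lies in Aut(w_p): explicitly, (τ2⊗τ2⊗τ2)(w_p) = aη^3(yxz+xzy+zyx) + bη^3(yzx+xyz+zxy) + c(x^3+y^3+z^3), which is not a scalar multiple of w_p, where ε = η^3. -/
noncomputable section

variable {k : Type*} [Field k]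

lemma skly_012 (a b c : k) : skly a b c 0 1 2 = a := by
  simp [skly, mono]

lemma skly_021 (a b c : k) : skly a b c 0 2 1 = b := by
  simp [skly, mono]

lemma skly_000 (a b c : k) : skly a b c 0 0 0 = c := by
  simp [skly, mono]

set_option maxHeartbeats 2000000 in
/-- `(τ₂ ⊗ τ₂ ⊗ τ₂)(w_p) = w_{p'}` with `p' = (εb : εa : c)`. -/
lemma actT_tau2 (eps a b c : k) (h3 : eps ^ 3 = 1) :
    actT (!![(0 : k), 1, 0; 1, 0, 0; 0, 0, eps]) (skly a b c) =
      skly (eps * b) (eps * a) c := by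
  funext i j l
  simp only [actT, skly, mono, Fin.sum_univ_three, Pi.add_apply, Pi.smul_apply, smul_eq_mul,
    Matrix.cons_val', Matrix.cons_val_zero, Matrix.cons_val_one, Matrix.head_cons,
    Matrix.empty_val', Matrix.cons_val_fin_one, Matrix.head_fin_const, Matrix.cons_val_two,
    Matrix.tail_cons]
  fin_cases i <;> fin_cases j <;> fin_cases l <;> norm_num [Fin.ext_iff] <;>
    simp -failIfUnchanged only [Matrix.cons_val] <;> norm_num -failIfUnchanged <;>
    first | ring1 | (linear_combination c * h3) | (linear_combination (eps ^ 3 + 1) * c * h3)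

set_option maxHeartbeats 2000000 in
/-- `(τ₂² ⊗ τ₂² ⊗ τ₂²)(w_p) = w_{p''}` with `p'' = (ε²a : ε²b : c)`. -/
lemma actT_tau2sq (eps a b c : k) (h3 : eps ^ 3 = 1) :
    actT ((!![(0 : k), 1, 0; 1, 0, 0; 0, 0, eps]) *
        (!![(0 : k), 1, 0; 1, 0, 0; 0, 0, eps])) (skly a b c) =
      skly (eps ^ 2 * a) (eps ^ 2 * b) c := by
  have hM : (!![(0 : k), 1, 0; 1, 0, 0; 0, 0, eps]) *
      (!![(0 : k), 1, 0; 1, 0, 0; 0, 0, eps]) =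
      !![(1 : k), 0, 0; 0, 1, 0; 0, 0, eps ^ 2] := by
    rw [Matrix.mul_fin_three]
    norm_num
    ring
  rw [hM]
  funext i j l
  simp only [actT, skly, mono, Fin.sum_univ_three, Pi.add_apply, Pi.smul_apply, smul_eq_mul,
    Matrix.cons_val', Matrix.cons_val_zero, Matrix.cons_val_one, Matrix.head_cons,
    Matrix.empty_val', Matrix.cons_val_fin_one, Matrix.head_fin_const, Matrix.cons_val_two,
    Matrix.tail_cons]
  fin_cases i <;> fin_cases j <;> fin_cases l <;> norm_num [Fin.ext_iff] <;>
    simp -failIfUnchanged only [Matrix.cons_val] <;> norm_num -failIfUnchanged <;>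
    first | ring1 | (linear_combination c * h3) | (linear_combination (eps ^ 3 + 1) * c * h3)

/-- Let `p = (a:b:c)` be a non-3-torsion point of the Fermat cubic
(`a³+b³+c³ = 0`, `abc ≠ 0`), `w_p` the Sklyanin potential, and `τ₂ ∈ GL(V)`
with `τ₂(x) = y`, `τ₂(y) = x`, `τ₂(z) = εz` (`ε` a primitive 3rd root of
unity). Then `(τ₂ ⊗ τ₂ ⊗ τ₂)(w_p) = aε(yxz+xzy+zyx) + bε(yzx+xyz+zxy) +
c(x³+y³+z³)`, which is not a scalar multiple of `w_p`; and neither `τ₂` nor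
`τ₂²` lies in `Aut(w_p)`. -/
theorem tau2_not_in_Aut_skly {k : Type*} [Field k] [IsAlgClosed k] [CharZero k]
    (eps a b c : k) (heps : IsPrimitiveRoot eps 3)
    (habc : a * b * c ≠ 0) (hE : a ^ 3 + b ^ 3 + c ^ 3 = 0) :
    actT (!![(0 : k), 1, 0; 1, 0, 0; 0, 0, eps]) (skly a b c) =
        skly (eps * b) (eps * a) c ∧
    (¬ ∃ mu : k, actT (!![(0 : k), 1, 0; 1, 0, 0; 0, 0, eps]) (skly a b c) =
        mu • skly a b c) ∧
    (¬ ∃ mu : k, actT ((!![(0 : k), 1, 0; 1, 0, 0; 0, 0, eps]) *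
        (!![(0 : k), 1, 0; 1, 0, 0; 0, 0, eps])) (skly a b c) = mu • skly a b c) := by
  have ha : a ≠ 0 := fun h => habc (by simp [h])
  have hb : b ≠ 0 := fun h => habc (by simp [h])
  have hc : c ≠ 0 := fun h => habc (by simp [h])
  have heps3 : eps ^ 3 = 1 := heps.pow_eq_one
  have heps1 : eps ≠ 1 := heps.ne_one (by norm_num)
  have heps2 : eps ^ 2 ≠ 1 := by
    intro h
    apply heps1
    have h4 : eps ^ 3 = eps := by rw [pow_succ, h, one_mul]
    rw [h4] at heps3
    exact heps3
  refine ⟨actT_tau2 eps a b c heps3, ?_, ?_⟩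
  · rintro ⟨mu, hmu⟩
    rw [actT_tau2 eps a b c heps3] at hmu
    have h1 : eps * b = mu * a := by
      have := congrFun (congrFun (congrFun hmu 0) 1) 2
      simpa [skly_012] using this
    have h2 : eps * a = mu * b := by
      have := congrFun (congrFun (congrFun hmu 0) 2) 1
      simpa [skly_021] using this
    have h3 : c = mu * c := by
      have := congrFun (congrFun (congrFun hmu 0) 0) 0
      simpa [skly_000] using this
    have hmu1 : mu = 1 := by
      rcases mul_eq_mul_right_iff.mp (by linear_combination -h3 : mu * c = 1 * c) with h | h
      · exact h
      · exact absurd h hc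
    subst hmu1
    rw [one_mul] at h1 h2
    apply heps2
    have : eps ^ 2 * (a * b) = 1 * (a * b) := by
      rw [one_mul]
      calc eps ^ 2 * (a * b) = (eps * a) * (eps * b) := by ring
      _ = b * a := by rw [h1, h2]
      _ = a * b := by ring
    exact mul_right_cancel₀ (mul_ne_zero ha hb) this
  · rintro ⟨mu, hmu⟩
    rw [actT_tau2sq eps a b c heps3] at hmu
    have h3 : c = mu * c := by
      have := congrFun (congrFun (congrFun hmu 0) 0) 0
      simpa [skly_000] using this
    have hmu1 : mu = 1 := by
      rcases mul_eq_mul_right_iff.mp (by linear_combination -h3 : mu * c = 1 * c) with h | h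
      · exact h
      · exact absurd h hc
    subst hmu1
    have h1 : eps ^ 2 * a = 1 * a := by
      have := congrFun (congrFun (congrFun hmu 0) 1) 2
      simpa [skly_012] using this
    exact heps2 (mul_right_cancel₀ ha h1)
end
end
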